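/- For any matrix C ∈ SO₀(2,1), one has (c₁₁ − 1)² = (c₂₂ − c₃₃)² + (c₂₃ + c₃₂)². -/
import Mathlib

open Matrix
noncomputable def Imat : Matrix (Fin 3) (Fin 3) ℝ := diagonal ![-1, 1, 1]
noncomputable def amat : Matrix (Fin 3) (Fin 3) ℝ := !![0,1,0; 1,0,0; 0,0,0]
noncomputable def bmat : Matrix (Fin 3) (Fin 3) ℝ := !![0,0,1; 0,0,0; 1,0,0]
noncomputable def cmat : Matrix (Fin 3) (Fin 3) ℝ := !![0,0,0; 0,0,-1; 0,1,0]
noncomputable def rot2 (η : ℝ) : Matrix (Fin 2) (Fin 2) ℝ :=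
  !![Real.cos η, -Real.sin η; Real.sin η, Real.cos η]
noncomputable def Kmat (η : ℝ) : Matrix (Fin 3) (Fin 3) ℝ :=
  !![1,0,0; 0,Real.cos η,-Real.sin η; 0,Real.sin η,Real.cos η]
def inSO21 (C : Matrix (Fin 3) (Fin 3) ℝ) : Prop :=
  C⁻¹ = Imat * Cᵀ * Imat ∧ C.det = 1 ∧ 1 ≤ C 0 0
theorem stmt12 (C : Matrix (Fin 3) (Fin 3) ℝ) (hC : inSO21 C) :
    (C 0 0 - 1) ^ 2 = (C 1 1 - C 2 2) ^ 2 + (C 1 2 + C 2 1) ^ 2 := by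
  obtain ⟨hinv, hdet, -⟩ := hC
  have hunit : IsUnit C.det := by rw [hdet]; exact isUnit_one
  have h1 : C * (Imat * Cᵀ * Imat) = 1 := by
    rw [← hinv]; exact Matrix.mul_nonsing_inv C hunit
  have h2 : (Imat * Cᵀ * Imat) * C = 1 := by
    rw [← hinv]; exact Matrix.nonsing_inv_mul C hunit
  have hadj : C.adjugate = Imat * Cᵀ * Imat := by
    rw [← hinv, Matrix.inv_def, hdet]; simp
  have hA : -(C 1 0)^2 + (C 1 1)^2 + (C 1 2)^2 = 1 := by
    have := congrFun (congrFun h1 1) 1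
    simp [Imat, Matrix.mul_apply, Fin.sum_univ_three, Matrix.diagonal] at this
    ring_nf at this ⊢
    linarith
  have hB : -(C 2 0)^2 + (C 2 1)^2 + (C 2 2)^2 = 1 := by
    have := congrFun (congrFun h1 2) 2
    simp [Imat, Matrix.mul_apply, Fin.sum_univ_three, Matrix.diagonal] at this
    ring_nf at this ⊢
    linarith
  have hCc : -(C 0 0)^2 + (C 1 0)^2 + (C 2 0)^2 = -1 := by
    have := congrFun (congrFun h2 0) 0
    simp [Imat, Matrix.mul_apply, Fin.sum_univ_three, Matrix.diagonal] at this
    ring_nf at this ⊢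
    linarith
  have hD : C 1 1 * C 2 2 - C 1 2 * C 2 1 = C 0 0 := by
    have := congrFun (congrFun hadj 0) 0
    rw [Matrix.adjugate_fin_three] at this
    simpa [Imat, Matrix.mul_apply, Fin.sum_univ_three, Matrix.diagonal] using this
  linear_combination -hA - hB - hCc + 2 * hD
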